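/- Fix c ∈ ℝ. For μ ∈ (0,1), let K_{μ,c}(v,u) = ½|u|² + 2|v|²⟨u, iv⟩ − μ·Im(uv) − (1−μ)/2 − μ|v|²/|2v²−1| + c|v|², defined for (v,u) ∈ ℂ² with 2v² ≠ 1, and define the rescaled Hamiltonian K̂_{μ,c}(v̂,û) = (1/(1−μ)) · K_{μ,c}(√(1−μ)·v̂, √(1−μ)·û). Then, as μ → 1⁻, K̂_{μ,c} converges uniformly on every compact subset of ℂ² to the function F(v̂,û) = ½|û|² − Im(û v̂) + (c−1)|v̂|² − ½; in particular, for every compact subset of ℂ² there is μ₀ < 1 such that K̂_{μ,c} is defined on that set for all μ ∈ (μ₀,1). -/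

import Mathlib

open Filter Topology

/-- The real inner product `⟨a,b⟩ = Re(a·conj b)` on `ℂ`. -/
noncomputable def rinner (a b : ℂ) : ℝ := (a * (starRingEnd ℂ) b).re

/-- The Levi-Civita regularized PCR3BP Hamiltonian
`K_{μ,c}(v,u) = ½|u|² + 2|v|²⟨u,iv⟩ − μ·Im(uv) − (1−μ)/2 − μ|v|²/|2v²−1| + c|v|²`. -/
noncomputable def Kreg (μ c : ℝ) (v u : ℂ) : ℝ :=
  (1 / 2) * ‖u‖ ^ 2 + 2 * ‖v‖ ^ 2 * rinner u (Complex.I * v)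
    - μ * (u * v).im - (1 - μ) / 2 - μ * ‖v‖ ^ 2 / ‖2 * v ^ 2 - 1‖ + c * ‖v‖ ^ 2

/-- The rescaled Hamiltonian `K̂_{μ,c}(v̂,û) = (1/(1−μ)) K_{μ,c}(√(1−μ)v̂, √(1−μ)û)`. -/
noncomputable def KregHat (μ c : ℝ) (v u : ℂ) : ℝ :=
  (1 / (1 - μ)) * Kreg μ c ((Real.sqrt (1 - μ) : ℂ) * v) ((Real.sqrt (1 - μ) : ℂ) * u)

lemma abs_rinner_le (a b : ℂ) : |rinner a b| ≤ ‖a‖ * ‖b‖ := by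
  have h := Complex.abs_re_le_norm (a * (starRingEnd ℂ) b)
  calc |rinner a b| ≤ ‖a * (starRingEnd ℂ) b‖ := by
        simpa [rinner] using h
    _ = ‖a‖ * ‖b‖ := by simp [norm_mul]

lemma rinner_smul (r : ℝ) (a b : ℂ) :
    rinner ((r:ℂ) * a) (Complex.I * ((r:ℂ) * b)) = r ^ 2 * rinner a (Complex.I * b) := by
  simp [rinner, map_mul, Complex.conj_ofReal, Complex.mul_re, Complex.mul_im]; ring

lemma im_smul_mul (r : ℝ) (a b : ℂ) :
    ((r:ℂ) * a * ((r:ℂ) * b)).im = r ^ 2 * (a * b).im := by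
  simp [Complex.mul_im, Complex.mul_re]; ring

lemma norm_smul' (r : ℝ) (hr : 0 ≤ r) (a : ℂ) : ‖(r:ℂ) * a‖ = r * ‖a‖ := by
  simp [norm_mul, Complex.norm_real, abs_of_nonneg hr]

lemma sq_cast_sqrt {μ : ℝ} (hμ : μ < 1) :
    ((Real.sqrt (1 - μ) : ℝ) : ℂ) ^ 2 = ((1 - μ : ℝ) : ℂ) := by
  rw [← Complex.ofReal_pow, Real.sq_sqrt (by linarith)]

lemma KregHat_eq (μ c : ℝ) (hμ : μ < 1) (v u : ℂ) :
    KregHat μ c v u =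
      (1 / 2) * ‖u‖ ^ 2 + 2 * (1 - μ) * ‖v‖ ^ 2 * rinner u (Complex.I * v)
        - μ * (u * v).im - 1 / 2
        - μ * ‖v‖ ^ 2 / ‖2 * (((1 - μ : ℝ)) : ℂ) * v ^ 2 - 1‖ + c * ‖v‖ ^ 2 := by
  set s : ℝ := Real.sqrt (1 - μ) with hs
  have hε : (0:ℝ) < 1 - μ := by linarith
  have hs0 : 0 ≤ s := Real.sqrt_nonneg _
  have hs2 : s ^ 2 = 1 - μ := Real.sq_sqrt (le_of_lt hε)
  have hnorm : ‖2 * ((s:ℂ) * v) ^ 2 - 1‖ = ‖2 * (((1 - μ : ℝ)) : ℂ) * v ^ 2 - 1‖ := by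
    congr 1
    rw [mul_pow, sq_cast_sqrt hμ]
    ring
  rw [KregHat, Kreg, rinner_smul, im_smul_mul, norm_smul' s hs0 v, norm_smul' s hs0 u, hnorm]
  simp only [mul_pow]
  rw [hs2]
  have hne : (1 - μ) ≠ 0 := ne_of_gt hε
  field_simp

lemma denom_lb (M : ℝ) {ε : ℝ} (hε0 : 0 ≤ ε) (hεδ : ε ≤ 1 / (4 * M ^ 2 + 2)) {v : ℂ}
    (hv : ‖v‖ ≤ M) : (1:ℝ) / 2 ≤ ‖2 * ((ε : ℝ) : ℂ) * v ^ 2 - 1‖ := by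
  have hM0 : 0 ≤ M := le_trans (norm_nonneg v) hv
  have hεδ' : ε * (4 * M ^ 2 + 2) ≤ 1 := by
    rw [le_div_iff₀ (by positivity)] at hεδ; exact hεδ
  have hx : ‖2 * ((ε : ℝ) : ℂ) * v ^ 2‖ = 2 * ε * ‖v‖ ^ 2 := by
    simp [norm_mul, Complex.norm_real, abs_of_nonneg hε0, norm_pow]
    try ring
  have hx2 : ‖2 * ((ε : ℝ) : ℂ) * v ^ 2‖ ≤ 1 / 2 := by
    rw [hx]
    nlinarith [norm_nonneg v, sq_nonneg (‖v‖ - M)]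
  have h2 : ‖(1:ℂ)‖ - ‖2 * ((ε : ℝ) : ℂ) * v ^ 2‖ ≤ ‖(1:ℂ) - 2 * ((ε : ℝ) : ℂ) * v ^ 2‖ :=
    norm_sub_norm_le _ _
  rw [norm_one, norm_sub_rev] at h2
  linarith

set_option maxHeartbeats 1000000 in
lemma key_bound (c M : ℝ) {μ : ℝ} (hμ0 : 0 < μ) (hμ1 : μ < 1)
    (hμd : 1 - μ ≤ 1 / (4 * M ^ 2 + 2)) {v u : ℂ} (hv : ‖v‖ ≤ M) (hu : ‖u‖ ≤ M) :
    |KregHat μ c v u - ((1 / 2) * ‖u‖ ^ 2 - (u * v).im + (c - 1) * ‖v‖ ^ 2 - 1 / 2)|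
      ≤ (1 - μ) * (6 * M ^ 4 + 3 * M ^ 2) := by
  have hM0 : 0 ≤ M := le_trans (norm_nonneg v) hv
  set ε : ℝ := 1 - μ with hεdef
  have hε0 : 0 < ε := by rw [hεdef]; linarith
  set D : ℝ := ‖2 * ((ε : ℝ) : ℂ) * v ^ 2 - 1‖ with hDdef
  have hD : (1:ℝ) / 2 ≤ D := denom_lb M hε0.le hμd hv
  have hDpos : 0 < D := by linarith
  set R : ℝ := rinner u (Complex.I * v) with hRdef
  have hv2 : ‖v‖ ^ 2 ≤ M * M := by nlinarith [norm_nonneg v]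
  have hR : |R| ≤ M * M := by
    have h := abs_rinner_le u (Complex.I * v)
    have h2 : ‖Complex.I * v‖ = ‖v‖ := by simp [norm_mul]
    rw [h2] at h
    calc |R| ≤ ‖u‖ * ‖v‖ := h
      _ ≤ M * M := by nlinarith [norm_nonneg u, norm_nonneg v]
  have hIm : |(u * v).im| ≤ M * M := by
    calc |(u * v).im| ≤ ‖u * v‖ := by
          simpa using Complex.abs_im_le_norm (u * v)
      _ = ‖u‖ * ‖v‖ := norm_mul _ _
      _ ≤ M * M := by nlinarith [norm_nonneg u, norm_nonneg v]
  have hD1 : |D - 1| ≤ 2 * ε * (M * M) := by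
    have h := abs_norm_sub_norm_le (2 * ((ε : ℝ) : ℂ) * v ^ 2 - 1) (-(1:ℂ))
    have h1 : (2 * ((ε : ℝ) : ℂ) * v ^ 2 - 1) - (-(1:ℂ)) = 2 * ((ε : ℝ) : ℂ) * v ^ 2 := by ring
    rw [h1, norm_neg, norm_one] at h
    have hx : ‖2 * ((ε : ℝ) : ℂ) * v ^ 2‖ = 2 * ε * ‖v‖ ^ 2 := by
      simp [norm_mul, Complex.norm_real, abs_of_nonneg hε0.le, norm_pow]
      try ring
    rw [hx] at h
    calc |D - 1| ≤ 2 * ε * ‖v‖ ^ 2 := h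
      _ ≤ 2 * ε * (M * M) := by
          exact mul_le_mul_of_nonneg_left hv2 (by positivity)
  have hfrac : |(D - μ) / D| ≤ ε * (4 * M ^ 2 + 2) := by
    rw [abs_div, abs_of_pos hDpos, div_le_iff₀ hDpos]
    have h1 : |D - μ| ≤ |D - 1| + ε := by
      have h := abs_add_le (D - 1) ε
      rw [abs_of_pos hε0] at h
      have e : D - μ = (D - 1) + ε := by rw [hεdef]; ring
      rw [e]; exact h
    nlinarith [mul_le_mul_of_nonneg_left hD
      (by positivity : (0:ℝ) ≤ ε * (4 * M ^ 2 + 2))]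
  rw [KregHat_eq μ c hμ1 v u]
  have heq : (1 / 2) * ‖u‖ ^ 2 + 2 * (1 - μ) * ‖v‖ ^ 2 * R - μ * (u * v).im - 1 / 2
        - μ * ‖v‖ ^ 2 / D + c * ‖v‖ ^ 2
      - ((1 / 2) * ‖u‖ ^ 2 - (u * v).im + (c - 1) * ‖v‖ ^ 2 - 1 / 2)
      = 2 * ε * ‖v‖ ^ 2 * R + ε * (u * v).im + ‖v‖ ^ 2 * ((D - μ) / D) := by
    rw [hεdef]
    field_simp
    ring
  rw [heq]
  have hb1 : |2 * ε * ‖v‖ ^ 2 * R| ≤ ε * (2 * M ^ 4) := by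
    rw [abs_mul, abs_of_nonneg (by positivity : (0:ℝ) ≤ 2 * ε * ‖v‖ ^ 2)]
    have hNN : ‖v‖ ^ 2 * |R| ≤ (M * M) * (M * M) :=
      mul_le_mul hv2 hR (abs_nonneg _) (by positivity)
    calc 2 * ε * ‖v‖ ^ 2 * |R| = (2 * ε) * (‖v‖ ^ 2 * |R|) := by ring
      _ ≤ (2 * ε) * ((M * M) * (M * M)) := mul_le_mul_of_nonneg_left hNN (by positivity)
      _ = ε * (2 * M ^ 4) := by ring
  have hb2 : |ε * (u * v).im| ≤ ε * M ^ 2 := by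
    rw [abs_mul, abs_of_pos hε0]
    calc ε * |(u * v).im| ≤ ε * (M * M) := mul_le_mul_of_nonneg_left hIm hε0.le
      _ = ε * M ^ 2 := by ring
  have hb3 : |‖v‖ ^ 2 * ((D - μ) / D)| ≤ ε * (4 * M ^ 4 + 2 * M ^ 2) := by
    rw [abs_mul, abs_of_nonneg (by positivity : (0:ℝ) ≤ ‖v‖ ^ 2)]
    calc ‖v‖ ^ 2 * |(D - μ) / D| ≤ (M * M) * (ε * (4 * M ^ 2 + 2)) :=
        mul_le_mul hv2 hfrac (abs_nonneg _) (by positivity)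
      _ = ε * (4 * M ^ 4 + 2 * M ^ 2) := by ring
  calc |2 * ε * ‖v‖ ^ 2 * R + ε * (u * v).im + ‖v‖ ^ 2 * ((D - μ) / D)|
      ≤ |2 * ε * ‖v‖ ^ 2 * R + ε * (u * v).im| + |‖v‖ ^ 2 * ((D - μ) / D)| := abs_add_le _ _
    _ ≤ |2 * ε * ‖v‖ ^ 2 * R| + |ε * (u * v).im| + |‖v‖ ^ 2 * ((D - μ) / D)| := by
        have := abs_add_le (2 * ε * ‖v‖ ^ 2 * R) (ε * (u * v).im)
        linarith
    _ ≤ ε * (2 * M ^ 4) + ε * M ^ 2 + ε * (4 * M ^ 4 + 2 * M ^ 2) :=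
        add_le_add (add_le_add hb1 hb2) hb3
    _ = ε * (6 * M ^ 4 + 3 * M ^ 2) := by ring

/-- In the lunar limit `μ → 1⁻` the rescaled regularized PCR3BP Hamiltonian
converges uniformly on compact subsets of `ℂ²` to
`F(v̂,û) = ½|û|² − Im(ûv̂) + (c−1)|v̂|² − ½`; moreover on any compact set the
rescaled Hamiltonian is genuinely defined (no collision singularity, i.e.
`2(√(1−μ)v̂)² ≠ 1`) for all `μ` close enough to `1`. -/
theorem rescaled_hamiltonian_lunar_limit (c : ℝ) :
    ∀ S : Set (ℂ × ℂ), IsCompact S →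
      TendstoUniformlyOn (fun (μ : ℝ) (p : ℂ × ℂ) => KregHat μ c p.1 p.2)
        (fun p : ℂ × ℂ =>
          (1 / 2) * ‖p.2‖ ^ 2 - (p.2 * p.1).im + (c - 1) * ‖p.1‖ ^ 2 - 1 / 2)
        (nhdsWithin 1 (Set.Ioo (0:ℝ) 1)) S ∧
      ∀ᶠ μ : ℝ in nhdsWithin 1 (Set.Ioo (0:ℝ) 1),
        ∀ p ∈ S, 2 * ((Real.sqrt (1 - μ) : ℂ) * p.1) ^ 2 ≠ 1 := by
  intro S hS
  obtain ⟨r, hr⟩ := hS.isBounded.subset_closedBall 0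
  set M : ℝ := max r 0 with hMdef
  have hM0 : 0 ≤ M := le_max_right _ _
  have hbound : ∀ p ∈ S, ‖p.1‖ ≤ M ∧ ‖p.2‖ ≤ M := by
    intro p hp
    have h := hr hp
    rw [Metric.mem_closedBall, dist_zero_right] at h
    exact ⟨le_trans (norm_fst_le p) (le_trans h (le_max_left _ _)),
      le_trans (norm_snd_le p) (le_trans h (le_max_left _ _))⟩
  set δ : ℝ := 1 / (4 * M ^ 2 + 2) with hδdef
  have hδ0 : 0 < δ := by positivity
  have hsmall : ∀ η : ℝ, 0 < η → ∀ᶠ μ : ℝ in nhdsWithin 1 (Set.Ioo (0:ℝ) 1),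
      μ ∈ Set.Ioo (0:ℝ) 1 ∧ 1 - μ < η := by
    intro η hη
    have h1 : ∀ᶠ μ : ℝ in nhds (1:ℝ), 1 - η < μ :=
      eventually_gt_nhds (by linarith)
    have h2 : ∀ᶠ μ : ℝ in nhdsWithin 1 (Set.Ioo (0:ℝ) 1), 1 - η < μ :=
      h1.filter_mono nhdsWithin_le_nhds
    have h3 : ∀ᶠ μ : ℝ in nhdsWithin 1 (Set.Ioo (0:ℝ) 1), μ ∈ Set.Ioo (0:ℝ) 1 :=
      eventually_mem_nhdsWithin
    filter_upwards [h2, h3] with μ ha hb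
    exact ⟨hb, by linarith⟩
  constructor
  · rw [Metric.tendstoUniformlyOn_iff]
    intro ε' hε'
    set C : ℝ := 6 * M ^ 4 + 3 * M ^ 2 with hCdef
    have hC0 : 0 ≤ C := by positivity
    have hη0 : 0 < min δ (ε' / (C + 1)) := lt_min hδ0 (by positivity)
    filter_upwards [hsmall _ hη0] with μ hμ
    obtain ⟨⟨hμ0, hμ1⟩, hμη⟩ := hμ
    intro p hp
    obtain ⟨hv, hu⟩ := hbound p hp
    have hμd : 1 - μ ≤ δ := le_of_lt (lt_of_lt_of_le hμη (min_le_left _ _))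
    have hkey := key_bound c M hμ0 hμ1 hμd hv hu
    rw [Real.dist_eq, abs_sub_comm]
    have h1 : 1 - μ < ε' / (C + 1) := lt_of_lt_of_le hμη (min_le_right _ _)
    have h2 : (1 - μ) * C < ε' := by
      have : (1 - μ) * (C + 1) < ε' := by
        rw [← lt_div_iff₀ (by positivity : (0:ℝ) < C + 1)]
        exact h1
      nlinarith [hμ1]
    exact lt_of_le_of_lt hkey h2
  · filter_upwards [hsmall δ hδ0] with μ hμ
    obtain ⟨⟨hμ0, hμ1⟩, hμη⟩ := hμ
    intro p hp
    obtain ⟨hv, _⟩ := hbound p hp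
    have hε0 : (0:ℝ) ≤ 1 - μ := by linarith
    have hD := denom_lb M hε0 (le_of_lt hμη) hv
    have hne : 2 * (((1 - μ : ℝ)) : ℂ) * p.1 ^ 2 - 1 ≠ 0 := by
      intro h
      rw [h, norm_zero] at hD
      linarith
    have heq : 2 * ((Real.sqrt (1 - μ) : ℂ) * p.1) ^ 2 = 2 * (((1 - μ : ℝ)) : ℂ) * p.1 ^ 2 := by
      rw [mul_pow, sq_cast_sqrt hμ1]
      ring
    rw [heq]
    exact fun h => hne (by rw [h]; ring)
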